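/- Quantitative bound on α for two different connections (Lemma A.2): Let f_l, f_r be uniformly convex C² fluxes as in the context and let (A,B) and (A',B') be connections. For any two pairs (u_l,u_r), (v_l,v_r) ∈ ℝ² satisfying I^{AB}(u_l,u_r) ≤ 0, I^{A'B'}(v_l,v_r) ≤ 0, f_l(u_l) = f_r(u_r) and f_l(v_l) = f_r(v_r), one has α(u_l,u_r,v_l,v_r) ≤ 2·|f_r(B') − f_r(B)|. -/
import Mathlib


noncomputable section

/-- The interface entropy functional
`I^{AB}(u_l,u_r) = sgn(u_r - B)(f_r(u_r) - f_r(B)) - sgn(u_l - A)(f_l(u_l) - f_l(A))`. -/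
def IAB (fl fr : ℝ → ℝ) (A B ul ur : ℝ) : ℝ :=
  Real.sign (ur - B) * (fr ur - fr B) - Real.sign (ul - A) * (fl ul - fl A)

/-- The Kruzhkov interface functional
`α(u_l,u_r,v_l,v_r) = sgn(u_r - v_r)(f_r(u_r) - f_r(v_r)) - sgn(u_l - v_l)(f_l(u_l) - f_l(v_l))`. -/
def alphaFn (fl fr : ℝ → ℝ) (ul ur vl vr : ℝ) : ℝ :=
  Real.sign (ur - vr) * (fr ur - fr vr) - Real.sign (ul - vl) * (fl ul - fl vl)
private lemma strictBranches (f : ℝ → ℝ) (a : ℝ) (ha : 0 < a) (hf : ContDiff ℝ 2 f)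
    (hf2 : ∀ u : ℝ, a ≤ deriv (deriv f) u) (θ : ℝ) (hθ : deriv f θ = 0) :
    StrictMonoOn f (Set.Ici θ) ∧ StrictAntiOn f (Set.Iic θ) := by
  have h2 : ContDiff ℝ (1+1) f := by exact_mod_cast hf
  have hdf : ContDiff ℝ 1 (deriv f) := (contDiff_succ_iff_deriv.mp h2).2.2
  have hmono : StrictMono (deriv f) :=
    strictMono_of_deriv_pos (fun x => lt_of_lt_of_le ha (hf2 x))
  constructor
  · refine strictMonoOn_of_deriv_pos (convex_Ici θ) hf.continuous.continuousOn ?_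
    intro x hx
    rw [interior_Ici] at hx
    have := hmono hx
    linarith [hθ]
  · refine strictAntiOn_of_deriv_neg (convex_Iic θ) hf.continuous.continuousOn ?_
    intro x hx
    rw [interior_Iic] at hx
    have := hmono hx
    linarith [hθ]

/-- Lower bound: `I^{AB}(v_l,v_r) ≤ 0` with the Rankine–Hugoniot condition forces
`f_r(v_r) ≥ f_r(B)`. -/
private lemma conn_lower (fl fr : ℝ → ℝ) (θl θr A B vl vr : ℝ)
    (hMl : StrictAntiOn fl (Set.Iic θl)) (hMr : StrictMonoOn fr (Set.Ici θr))
    (hA : A ≤ θl) (hB : θr ≤ B) (hAB : fl A = fr B)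
    (hRH : fl vl = fr vr) (hI : IAB fl fr A B vl vr ≤ 0) :
    fr B ≤ fr vr := by
  by_contra h
  push_neg at h
  have hvrB : vr < B := by
    rcases le_or_gt θr vr with h1 | h1
    · by_contra h2
      push_neg at h2
      exact absurd (hMr.monotoneOn (Set.mem_Ici.mpr hB) (Set.mem_Ici.mpr h1) h2) (not_le.mpr h)
    · exact lt_of_lt_of_le h1 hB
  have hvlA : A < vl := by
    rcases le_or_gt vl θl with h1 | h1
    · by_contra h2
      push_neg at h2
      have := hMl.antitoneOn (Set.mem_Iic.mpr h1) (Set.mem_Iic.mpr hA) h2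
      rw [hRH, hAB] at this
      exact absurd this (not_le.mpr h)
    · exact lt_of_le_of_lt hA h1
  have h1 : Real.sign (vr - B) = -1 := Real.sign_of_neg (by linarith)
  have h2 : Real.sign (vl - A) = 1 := Real.sign_of_pos (by linarith)
  unfold IAB at hI
  rw [h1, h2, hRH, hAB] at hI
  linarith

/-- Upper bound: if `u_l` lies on the decreasing branch and `u_r` on the increasing
branch, then `I^{AB}(u_l,u_r) ≤ 0` forces `f_r(u_r) ≤ f_r(B)`. -/
private lemma conn_upper (fl fr : ℝ → ℝ) (θl θr A B ul ur : ℝ)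
    (hMl : StrictAntiOn fl (Set.Iic θl)) (hMr : StrictMonoOn fr (Set.Ici θr))
    (hA : A ≤ θl) (hB : θr ≤ B) (hAB : fl A = fr B)
    (hul : ul ≤ θl) (hur : θr ≤ ur)
    (hRH : fl ul = fr ur) (hI : IAB fl fr A B ul ur ≤ 0) :
    fr ur ≤ fr B := by
  by_contra h
  push_neg at h
  have hurB : B < ur := by
    by_contra h2
    push_neg at h2
    exact absurd (hMr.monotoneOn (Set.mem_Ici.mpr hur) (Set.mem_Ici.mpr hB) h2) (not_le.mpr h)
  have hulA : ul < A := by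
    by_contra h2
    push_neg at h2
    have := hMl.antitoneOn (Set.mem_Iic.mpr hA) (Set.mem_Iic.mpr hul) h2
    rw [hRH, hAB] at this
    exact absurd this (not_le.mpr h)
  have h1 : Real.sign (ur - B) = 1 := Real.sign_of_pos (by linarith)
  have h2 : Real.sign (ul - A) = -1 := Real.sign_of_neg (by linarith)
  unfold IAB at hI
  rw [h1, h2, hRH, hAB] at hI
  linarith

/-- **Lemma A.2**: quantitative bound on `α` for two different connections. -/
theorem alpha_bound_two_connections
    (fl fr : ℝ → ℝ) (a : ℝ) (ha : 0 < a)
    (hfl : ContDiff ℝ 2 fl) (hfr : ContDiff ℝ 2 fr)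
    (hfl2 : ∀ u : ℝ, a ≤ deriv (deriv fl) u) (hfr2 : ∀ u : ℝ, a ≤ deriv (deriv fr) u)
    (θl θr : ℝ) (hθl : deriv fl θl = 0) (hθr : deriv fr θr = 0)
    (A B : ℝ) (hAB : fl A = fr B) (hA : A ≤ θl) (hB : θr ≤ B)
    (A' B' : ℝ) (hAB' : fl A' = fr B') (hA' : A' ≤ θl) (hB' : θr ≤ B')
    (ul ur vl vr : ℝ)
    (hIu : IAB fl fr A B ul ur ≤ 0) (hIv : IAB fl fr A' B' vl vr ≤ 0)
    (hRHu : fl ul = fr ur) (hRHv : fl vl = fr vr) :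
    alphaFn fl fr ul ur vl vr ≤ 2 * |fr B' - fr B| := by
  obtain ⟨hMlI, hMlD⟩ := strictBranches fl a ha hfl hfl2 θl hθl
  obtain ⟨hMrI, hMrD⟩ := strictBranches fr a ha hfr hfr2 θr hθr
  have habs1 : fr B - fr B' ≤ |fr B' - fr B| := by
    rw [abs_sub_comm]; exact le_abs_self _
  have habs2 : fr B' - fr B ≤ |fr B' - fr B| := le_abs_self _
  -- lower bounds from the I-conditions
  have hp : fr B ≤ fr ur := conn_lower fl fr θl θr A B ul ur hMlD hMrI hA hB hAB hRHu hIu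
  have hq : fr B' ≤ fr vr := conn_lower fl fr θl θr A' B' vl vr hMlD hMrI hA' hB' hAB' hRHv hIv
  unfold alphaFn
  rw [hRHu, hRHv]
  have hfac : Real.sign (ur - vr) * (fr ur - fr vr) - Real.sign (ul - vl) * (fr ur - fr vr)
      = (Real.sign (ur - vr) - Real.sign (ul - vl)) * (fr ur - fr vr) := by ring
  rw [hfac]
  -- trivial cases where one pair is equal (then the fluxes agree)
  rcases eq_or_ne ur vr with hrr | hrr
  · rw [hrr]; simp only [sub_self, mul_zero]; positivity
  rcases eq_or_ne ul vl with hll | hll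
  · have h0 : fr ur = fr vr := by rw [← hRHu, ← hRHv, hll]
    rw [h0]; simp only [sub_self, mul_zero]; positivity
  rcases lt_or_gt_of_ne hrr with hR | hR
  · -- ur < vr
    have hsr : Real.sign (ur - vr) = -1 := Real.sign_of_neg (by linarith)
    rcases lt_or_gt_of_ne hll with hL | hL
    · -- ul < vl : signs opposite gives factor -1 - (-1) = 0
      have hsl : Real.sign (ul - vl) = -1 := Real.sign_of_neg (by linarith)
      rw [hsr, hsl]; simp only [sub_self, zero_mul]; positivity
    · -- ul > vl : factor -2, need fr vr - fr ur ≤ |·| when fr vr > fr ur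
      have hsl : Real.sign (ul - vl) = 1 := Real.sign_of_pos (by linarith)
      rw [hsr, hsl]
      rcases le_or_gt (fr vr) (fr ur) with hpq | hpq
      · nlinarith [abs_nonneg (fr B' - fr B)]
      · -- fr vr > fr ur : v is the "decreasing-left, increasing-right" state
        have hvl : vl ≤ θl := by
          by_contra hc
          push_neg at hc
          have h3 : fl vl < fl ul := hMlI (Set.mem_Ici.mpr (le_of_lt hc))
            (Set.mem_Ici.mpr (le_of_lt (lt_trans hc hL))) hL
          rw [hRHu, hRHv] at h3
          linarith
        have hvr : θr ≤ vr := by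
          by_contra hc
          push_neg at hc
          have h3 : fr vr < fr ur := by
            have := hMrD (Set.mem_Iic.mpr (le_of_lt (lt_trans hR hc))) (Set.mem_Iic.mpr (le_of_lt hc)) hR
            exact this
          linarith
        have hqs : fr vr ≤ fr B' :=
          conn_upper fl fr θl θr A' B' vl vr hMlD hMrI hA' hB' hAB' hvl hvr hRHv hIv
        linarith
  · -- ur > vr
    have hsr : Real.sign (ur - vr) = 1 := Real.sign_of_pos (by linarith)
    rcases lt_or_gt_of_ne hll with hL | hL
    · -- ul < vl : factor 2
      have hsl : Real.sign (ul - vl) = -1 := Real.sign_of_neg (by linarith)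
      rw [hsr, hsl]
      rcases le_or_gt (fr ur) (fr vr) with hpq | hpq
      · nlinarith [abs_nonneg (fr B' - fr B)]
      · have hul : ul ≤ θl := by
          by_contra hc
          push_neg at hc
          have h3 : fl ul < fl vl := hMlI (Set.mem_Ici.mpr (le_of_lt hc)) (Set.mem_Ici.mpr (le_of_lt (lt_trans hc hL))) hL
          rw [hRHu, hRHv] at h3
          linarith
        have hur : θr ≤ ur := by
          by_contra hc
          push_neg at hc
          have h3 : fr ur < fr vr := hMrD (Set.mem_Iic.mpr (le_of_lt (lt_trans hR hc))) (Set.mem_Iic.mpr (le_of_lt hc)) hR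
          linarith
        have hps : fr ur ≤ fr B :=
          conn_upper fl fr θl θr A B ul ur hMlD hMrI hA hB hAB hul hur hRHu hIu
        linarith
    · -- ul > vl : signs equal, factor 0
      have hsl : Real.sign (ul - vl) = 1 := Real.sign_of_pos (by linarith)
      rw [hsr, hsl]; simp only [sub_self, zero_mul]; positivity
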